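/- arXiv:2008.06005 — 3 statements merged into one kernel-verified Lean document; each statement's English description precedes it below -/
import Mathlib

section
/- Let Λ be a string algebra, let b be a prime band and let aB be a string where a, b are arrows (B the formal inverse of b). Then any cyclic permutation of the prime band contains the substring aB at most once. -/
/-- A quiver with a set of monomial relations, presenting a string algebra. -/
structure SAQuiver where
  V : Type
  A : Type
  src : A → V
  tgt : A → V
  rel : Set (List A)

namespace SA

variable (S : SAQuiver)

/-- A syllable: a direct arrow (`Sum.inl`) or the formal inverse of an arrow (`Sum.inr`). -/
abbrev Syl := S.A ⊕ S.A

/-- A word of syllables, listed in order of traversal (the head is the first,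
i.e. rightmost, syllable in the usual right-to-left notation `αₙ…α₁`). -/
abbrev Word := List (Syl S)

def sylSrc : Syl S → S.V
  | Sum.inl a => S.src a
  | Sum.inr a => S.tgt a

def sylTgt : Syl S → S.V
  | Sum.inl a => S.tgt a
  | Sum.inr a => S.src a

def sylInv : Syl S → Syl S
  | Sum.inl a => Sum.inr a
  | Sum.inr a => Sum.inl a

/-- Consecutive syllables compose as a walk. -/
def IsWalk : Word S → Prop
  | [] => True
  | [_] => True
  | x :: y :: l => sylTgt S x = sylSrc S y ∧ IsWalk (y :: l)

/-- No two consecutive syllables are inverse to each other. -/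
def Reduced : Word S → Prop
  | x :: y :: l => y ≠ sylInv S x ∧ Reduced (y :: l)
  | _ => True

/-- No subword is a relation or the inverse of a relation. -/
def AvoidsRel (w : Word S) : Prop :=
  ∀ p ∈ S.rel, ¬ ((p.map (Sum.inl : S.A → Syl S)) <:+: w) ∧
    ¬ ((p.map (Sum.inr : S.A → Syl S)).reverse <:+: w)

/-- A (finite, nonempty) string. -/
def IsStr (w : Word S) : Prop :=
  w ≠ [] ∧ IsWalk S w ∧ Reduced S w ∧ AvoidsRel S w

def wSrc : Word S → Option S.V
  | [] => none
  | x :: _ => some (sylSrc S x)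

def wTgt (w : Word S) : Option S.V := w.getLast?.map (sylTgt S)

/-- A cyclic word: its target equals its source. -/
def Cyclic (w : Word S) : Prop := w ≠ [] ∧ wSrc S w = wTgt S w

/-- The `n`-th power of a word under concatenation. -/
def pow (w : Word S) (n : ℕ) : Word S := (List.replicate n w).flatten

/-- A word containing both a direct and an inverse syllable. -/
def Mixed (w : Word S) : Prop := (∃ a, Sum.inl a ∈ w) ∧ (∃ a, Sum.inr a ∈ w)

/-- A word that is not a proper power of a shorter word. -/
def Primitive (w : Word S) : Prop := ¬ ∃ (u : Word S) (k : ℕ), 2 ≤ k ∧ w = pow S u k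

/-- A rotation (cyclic permutation) of a word. -/
def IsRotation (u w : Word S) : Prop := ∃ l₁ l₂ : Word S, w = l₁ ++ l₂ ∧ u = l₂ ++ l₁

/-- A band: a primitive mixed cyclic string, all of whose powers are strings, whose first
syllable is inverse and whose last syllable is direct. -/
def IsBand (w : Word S) : Prop :=
  IsStr S w ∧ Cyclic S w ∧ Primitive S w ∧
    (∃ a, w.head? = some (Sum.inr a)) ∧ (∃ a, w.getLast? = some (Sum.inl a)) ∧
    ∀ n : ℕ, 1 ≤ n → IsStr S (pow S w n)

/-- A cyclic permutation of a band. -/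
def RotOfBand (u : Word S) : Prop := ∃ b, IsBand S b ∧ IsRotation S u b

/-- A prime band: no cyclic permutation of it is a concatenation of two or more cyclic
permutations of bands. -/
def IsPrimeBand (w : Word S) : Prop :=
  IsBand S w ∧
    ¬ ∃ (w' : Word S) (parts : List (Word S)), IsRotation S w' w ∧ 2 ≤ parts.length ∧
        w' = parts.flatten ∧ ∀ p ∈ parts, RotOfBand S p

/-- A word containing no cyclic permutation of a band as a subword. -/
def BandFree (w : Word S) : Prop := ¬ ∃ u, RotOfBand S u ∧ u <:+: w

/-- A word all of whose syllables are direct. -/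
def DirectWord (w : Word S) : Prop := ∀ x ∈ w, ∃ a, x = Sum.inl a

/-- A word all of whose syllables are inverse. -/
def InverseWord (w : Word S) : Prop := ∀ x ∈ w, ∃ a, x = Sum.inr a

/-- A string which is a substring of a cyclic permutation of a band. -/
def Extendable (w : Word S) : Prop := ∃ u, RotOfBand S u ∧ w <:+: u

/-- The axioms for `(Q, ρ)` to present a string algebra. -/
def IsStringAlgebra : Prop :=
  Finite S.V ∧ Finite S.A ∧
  (∀ p ∈ S.rel, p ≠ [] ∧ IsWalk S (p.map (Sum.inl : S.A → Syl S))) ∧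
  {p : List S.A | p ≠ [] ∧ IsWalk S (p.map (Sum.inl : S.A → Syl S)) ∧
      ∀ q ∈ S.rel, ¬ (q <:+: p)}.Finite ∧
  (∀ v : S.V, ¬ ∃ a b c : S.A, a ≠ b ∧ b ≠ c ∧ a ≠ c ∧
      S.src a = v ∧ S.src b = v ∧ S.src c = v) ∧
  (∀ v : S.V, ¬ ∃ a b c : S.A, a ≠ b ∧ b ≠ c ∧ a ≠ c ∧
      S.tgt a = v ∧ S.tgt b = v ∧ S.tgt c = v) ∧
  (∀ b c₁ c₂ : S.A, c₁ ≠ c₂ → IsStr S [Sum.inl b, Sum.inl c₁] →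
      ¬ IsStr S [Sum.inl b, Sum.inl c₂]) ∧
  (∀ b a₁ a₂ : S.A, a₁ ≠ a₂ → IsStr S [Sum.inl a₁, Sum.inl b] →
      ¬ IsStr S [Sum.inl a₂, Sum.inl b])

end SA

namespace SA

variable (S : SAQuiver)

/-! ### Sign functions and hammocks -/

/-- `σ` of a syllable: `σ(a) = σ a`, `σ(B) = ε b`. -/
def sylSg (σ ε : S.A → ℤ) : Syl S → ℤ
  | Sum.inl a => σ a
  | Sum.inr a => ε a

/-- `ε` of a syllable: `ε(a) = ε a`, `ε(B) = σ b`. -/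
def sylEp (σ ε : S.A → ℤ) : Syl S → ℤ
  | Sum.inl a => ε a
  | Sum.inr a => σ a

/-- The conditions on the chosen sign maps `σ, ε : Q₁ → {±1}`. -/
def SignOK (σ ε : S.A → ℤ) : Prop :=
  (∀ a, σ a = 1 ∨ σ a = -1) ∧ (∀ a, ε a = 1 ∨ ε a = -1) ∧
  (∀ a b, a ≠ b → S.src a = S.src b → σ a = -σ b) ∧
  (∀ a b, a ≠ b → S.tgt a = S.tgt b → ε a = -ε b) ∧
  (∀ c b : S.A, IsStr S [Sum.inl c, Sum.inl b] → σ b = -ε c)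

/-- Membership in the hammock `H_r(v)`: strings ending at `v` with `ε`-value `1`;
the empty word stands for the lazy string `1_{(v,1)}`. -/
def HrMem (σ ε : S.A → ℤ) (v : S.V) (w : Word S) : Prop :=
  w = [] ∨ (IsStr S w ∧ wTgt S w = some v ∧
    ∃ s, w.getLast? = some s ∧ sylEp S σ ε s = 1)

/-- The order `<_r` on `H_r(v)`:  `u <_r v` iff `v = u a x`, or `u = v B y`, or
`v = z a x ∧ u = z B y`. -/
def ltr (u v : Word S) : Prop :=
  (∃ (a : S.A) (x : Word S), v = x ++ [Sum.inl a] ++ u) ∨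
  (∃ (b : S.A) (y : Word S), u = y ++ [Sum.inr b] ++ v) ∨
  (∃ (a b : S.A) (x y z : Word S),
      v = x ++ [Sum.inl a] ++ z ∧ u = y ++ [Sum.inr b] ++ z)

/-- The inverse of a word. -/
def wInv (w : Word S) : Word S := (w.map (sylInv S)).reverse

/-- Membership in the hammock `H_l(v)`: strings starting at `v` with `σ`-value `-1`;
the empty word stands for the lazy string `1_{(v,-1)}`'s role in `H_l(v)`. -/
def HlMem (σ ε : S.A → ℤ) (v : S.V) (w : Word S) : Prop :=
  w = [] ∨ (IsStr S w ∧ wSrc S w = some v ∧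
    ∃ s, w.head? = some s ∧ sylSg S σ ε s = -1)

/-- The order `<_l` on `H_l(v)`: `u <_l v` iff `v⁻¹ <_r u⁻¹`. -/
def ltl (u v : Word S) : Prop := ltr S (wInv S v) (wInv S u)

/-- `v` is the direct successor of `u` in the total order `lt` restricted to `P`. -/
def DirSucc (P : Word S → Prop) (lt : Word S → Word S → Prop) (u v : Word S) : Prop :=
  P u ∧ P v ∧ lt u v ∧ ¬ ∃ w, P w ∧ lt u w ∧ lt w v

/-- A finite interval (chain of consecutive elements) in a hammock whose length sequence is
monotone. -/
def MonoChain (P : Word S → Prop) (lt : Word S → Word S → Prop) (n : ℕ)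
    (c : ℕ → Word S) : Prop :=
  (∀ i < n, DirSucc S P lt (c i) (c (i + 1))) ∧
  ((∀ i < n, (c i).length < (c (i + 1)).length) ∨
   (∀ i < n, (c (i + 1)).length < (c i).length))

/-- Torsion-freeness for one hammock: every finite interval with monotone length sequence
extends (on one of its two ends) to a strictly larger such interval. -/
def TFfor (P : Word S → Prop) (lt : Word S → Word S → Prop) : Prop :=
  ∀ (n : ℕ) (c : ℕ → Word S), MonoChain S P lt n c →
    ∃ c' : ℕ → Word S, MonoChain S P lt (n + 1) c' ∧
      ((∀ i ≤ n, c' i = c i) ∨ (∀ i ≤ n, c' (i + 1) = c i))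

/-- A torsion-free string algebra: both the left and right hammock conditions hold at
every vertex. -/
def TorsionFree (σ ε : S.A → ℤ) : Prop :=
  (∀ v : S.V, TFfor S (HrMem S σ ε v) (ltr S)) ∧
  (∀ v : S.V, TFfor S (HlMem S σ ε v) (ltl S))

/-! ### Bridges and the bridge quiver -/

/-- A weak bridge `b₁ → b₂`: a band-free string `u` (possibly of length zero) such that
`b₂ u b₁` is a string. -/
def IsWeakBridge (b₁ u b₂ : Word S) : Prop :=
  IsPrimeBand S b₁ ∧ IsPrimeBand S b₂ ∧ BandFree S u ∧ IsStr S (b₁ ++ u ++ b₂)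

/-- A bridge: a weak bridge which does not factor through another prime band. -/
def IsBridge (b₁ u b₂ : Word S) : Prop :=
  IsWeakBridge S b₁ u b₂ ∧
  ¬ ∃ (bb u₁ u₂ : Word S), IsPrimeBand S bb ∧ IsWeakBridge S b₁ u₁ bb ∧
      IsWeakBridge S bb u₂ b₂ ∧
      ((u = u₁ ++ u₂ ∧ u₁ ≠ [] ∧ u₂ ≠ []) ∨
       (∃ u₁' u₂' u₁'' u₂'' : Word S, u = u₁' ++ u₂' ∧ u₁' ≠ [] ∧ u₂' ≠ [] ∧
          u₁ = u₁' ++ u₁'' ∧ u₂ = u₂'' ++ u₂' ∧ bb = u₁'' ++ u₂''))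

/-- `R` is a set of representatives of the prime bands up to cyclic permutation. -/
def RepSet (R : Set (Word S)) : Prop :=
  (∀ r ∈ R, IsPrimeBand S r) ∧
  ∀ b, IsPrimeBand S b → ∃! r, r ∈ R ∧ IsRotation S b r

/-- One arrow of the bridge quiver with vertex set `R`. -/
def Step (R : Set (Word S)) (x y : Word S) : Prop :=
  x ∈ R ∧ y ∈ R ∧ ∃ u, IsBridge S x u y

/-- Reachability by a directed path in the bridge quiver. -/
def Reach (R : Set (Word S)) : Word S → Word S → Prop :=
  Relation.ReflTransGen (Step S R)

/-- Adjacency (in either direction) in the bridge quiver. -/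
def Adj (R : Set (Word S)) (x y : Word S) : Prop := Step S R x y ∨ Step S R y x

/-- Lying in the same connected component of the bridge quiver. -/
def SameComp (R : Set (Word S)) : Word S → Word S → Prop :=
  Relation.ReflTransGen (Adj S R)

/-- `x` lies on a meta-band, i.e. on a directed cycle of positive length in the bridge
quiver. -/
def OnMetaBand (R : Set (Word S)) (x : Word S) : Prop :=
  (∃ u, IsBridge S x u x ∧ u ≠ []) ∨
  (∃ y, y ≠ x ∧ y ∈ R ∧ Reach S R x y ∧ Reach S R y x)

/-- A meta-`⋃`-cyclic string algebra: each connected component of the bridge quiver has at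
least two vertices and is a union of meta-bands (every vertex and every arrow lies on a
directed cycle of positive length). -/
def MetaUCyclic (R : Set (Word S)) : Prop :=
  (∀ x ∈ R, ∃ y ∈ R, y ≠ x ∧ SameComp S R x y) ∧
  (∀ x ∈ R, OnMetaBand S R x) ∧
  (∀ x y u, x ∈ R → y ∈ R → IsBridge S x u y → Reach S R y x)

/-- A meta-torsion-free string algebra: each connected component of the bridge quiver has
at least two vertices, and every finite directed path of positive length extends to a
`ℤ`-indexed directed path. -/
def MetaTorsionFree (R : Set (Word S)) : Prop :=
  (∀ x ∈ R, ∃ y ∈ R, y ≠ x ∧ SameComp S R x y) ∧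
  (∀ (n : ℕ) (c e : ℕ → Word S), 0 < n → (∀ i ≤ n, c i ∈ R) →
    (∀ i < n, IsBridge S (c i) (e i) (c (i + 1))) →
    ∃ (g d : ℤ → Word S), (∀ i : ℤ, g i ∈ R) ∧
      (∀ i : ℤ, IsBridge S (g i) (d i) (g (i + 1))) ∧
      (∀ i : ℕ, i ≤ n → g (i : ℤ) = c i) ∧ (∀ i : ℕ, i < n → d (i : ℤ) = e i))

/-- A non-domestic string algebra: one with infinitely many bands. -/
def NonDomestic : Prop := ¬ {b : Word S | IsBand S b}.Finite

end SA

namespace SA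

variable {S : SAQuiver}

theorem pow_zero' (w : Word S) : pow S w 0 = [] := rfl

theorem pow_succ' (w : Word S) (n : ℕ) : pow S w (n + 1) = w ++ pow S w n := by
  simp [pow, List.replicate_succ]

theorem pow_one' (w : Word S) : pow S w 1 = w := by simp [pow]

theorem pow_nil (k : ℕ) : pow S [] k = [] := by
  induction k with
  | zero => rfl
  | succ k ih => rw [pow_succ']; simpa using ih

theorem pow_add' (w : Word S) (m n : ℕ) : pow S w (m + n) = pow S w m ++ pow S w n := by
  induction m with
  | zero => simp [pow_zero']
  | succ m ih => rw [Nat.succ_add, pow_succ', pow_succ', ih, List.append_assoc]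

theorem pow_mul' (w : Word S) (m n : ℕ) : pow S (pow S w m) n = pow S w (n * m) := by
  induction n with
  | zero => simp [pow_zero']
  | succ n ih => rw [pow_succ', ih, Nat.succ_mul, Nat.add_comm, pow_add']

theorem length_pow (w : Word S) (n : ℕ) : (pow S w n).length = n * w.length := by
  induction n with
  | zero => simp [pow_zero']
  | succ n ih => rw [pow_succ', List.length_append, ih, Nat.succ_mul, Nat.add_comm]

theorem pow_ne_nil {w : Word S} (hw : w ≠ []) {n : ℕ} (hn : 1 ≤ n) : pow S w n ≠ [] := by
  obtain ⟨m, rfl⟩ := Nat.exists_eq_add_of_le hn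
  rw [pow_add', pow_one']
  simp [hw]

theorem mem_pow {w : Word S} {x : Syl S} {n : ℕ} (h : x ∈ pow S w n) : x ∈ w := by
  simp only [pow, List.mem_flatten] at h
  obtain ⟨l, hl, hx⟩ := h
  rwa [List.eq_of_mem_replicate hl] at hx

theorem pow_prefix_pow (w : Word S) {m n : ℕ} (h : m ≤ n) : pow S w m <+: pow S w n := by
  obtain ⟨k, rfl⟩ := Nat.exists_eq_add_of_le h
  rw [pow_add']
  exact List.prefix_append _ _

end SA
namespace SA

variable {S : SAQuiver}

theorem walk_cons {c : Syl S} {l : Word S} :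
    IsWalk S (c :: l) ↔ (∀ d, l.head? = some d → sylTgt S c = sylSrc S d) ∧ IsWalk S l := by
  cases l <;> simp [IsWalk]

theorem red_cons {c : Syl S} {l : Word S} :
    Reduced S (c :: l) ↔ (∀ d, l.head? = some d → d ≠ sylInv S c) ∧ Reduced S l := by
  cases l <;> simp [Reduced]

theorem walk_append_right {l₁ l₂ : Word S} (h : IsWalk S (l₁ ++ l₂)) : IsWalk S l₂ := by
  induction l₁ with
  | nil => exact h
  | cons c l₁ ih => exact ih ((walk_cons.mp h).2)

theorem walk_append_left {l₁ l₂ : Word S} (h : IsWalk S (l₁ ++ l₂)) : IsWalk S l₁ := by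
  induction l₁ with
  | nil => trivial
  | cons c l₁ ih =>
    rw [List.cons_append, walk_cons] at h
    refine walk_cons.mpr ⟨?_, ih h.2⟩
    intro d hd
    exact h.1 d (by cases l₁ <;> simp_all)

theorem red_append_right {l₁ l₂ : Word S} (h : Reduced S (l₁ ++ l₂)) : Reduced S l₂ := by
  induction l₁ with
  | nil => exact h
  | cons c l₁ ih => exact ih ((red_cons.mp h).2)

theorem red_append_left {l₁ l₂ : Word S} (h : Reduced S (l₁ ++ l₂)) : Reduced S l₁ := by
  induction l₁ with
  | nil => trivial
  | cons c l₁ ih =>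
    rw [List.cons_append, red_cons] at h
    refine red_cons.mpr ⟨?_, ih h.2⟩
    intro d hd
    exact h.1 d (by cases l₁ <;> simp_all)

theorem walk_infix {l t : Word S} (h : IsWalk S l) (ht : t <:+: l) : IsWalk S t := by
  obtain ⟨p, q, rfl⟩ := ht
  rw [List.append_assoc] at h
  exact walk_append_left (walk_append_right h)

theorem red_infix {l t : Word S} (h : Reduced S l) (ht : t <:+: l) : Reduced S t := by
  obtain ⟨p, q, rfl⟩ := ht
  rw [List.append_assoc] at h
  exact red_append_left (red_append_right h)

theorem str_infix {Wd t : Word S} (hW : IsStr S Wd) (ht : t <:+: Wd) (hne : t ≠ []) :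
    IsStr S t :=
  ⟨hne, walk_infix hW.2.1 ht, red_infix hW.2.2.1 ht, fun p hp =>
    ⟨fun hc => (hW.2.2.2 p hp).1 (hc.trans ht), fun hc => (hW.2.2.2 p hp).2 (hc.trans ht)⟩⟩

theorem walk_glue {l₁ l₂ : Word S} {x : Syl S} (h₁ : IsWalk S (l₁ ++ [x]))
    (h₂ : IsWalk S (x :: l₂)) : IsWalk S (l₁ ++ x :: l₂) := by
  induction l₁ with
  | nil => exact h₂
  | cons c l₁ ih =>
    rw [List.cons_append, walk_cons] at h₁ ⊢
    refine ⟨?_, ih h₁.2⟩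
    intro d hd
    apply h₁.1
    cases l₁ <;> simp_all

theorem red_glue {l₁ l₂ : Word S} {x : Syl S} (h₁ : Reduced S (l₁ ++ [x]))
    (h₂ : Reduced S (x :: l₂)) : Reduced S (l₁ ++ x :: l₂) := by
  induction l₁ with
  | nil => exact h₂
  | cons c l₁ ih =>
    rw [List.cons_append, red_cons] at h₁ ⊢
    refine ⟨?_, ih h₁.2⟩
    intro d hd
    apply h₁.1
    cases l₁ <;> simp_all

theorem walk_last {l r : Word S} {x : Syl S} (hl : l ≠ []) (h : IsWalk S (l ++ x :: r)) :
    ∃ e, l.getLast? = some e ∧ sylTgt S e = sylSrc S x := by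
  induction l with
  | nil => simp at hl
  | cons c l ih =>
    cases l with
    | nil => exact ⟨c, rfl, (walk_cons.mp h).1 x (by simp)⟩
    | cons d l' =>
      obtain ⟨e, he, het⟩ := ih (by simp) ((walk_cons.mp h).2)
      exact ⟨e, by rw [List.getLast?_cons_cons]; exact he, het⟩

end SA
namespace SA

variable {S : SAQuiver}

theorem prefix_append_cases {t l₁ l₂ : Word S} (h : t <+: l₁ ++ l₂) :
    t <+: l₁ ∨ l₁ <+: t := by
  obtain ⟨r, hr⟩ := h
  rcases List.append_eq_append_iff.mp hr with ⟨a', ha, _⟩ | ⟨c', hc, _⟩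
  · exact Or.inl ⟨a', ha.symm⟩
  · exact Or.inr ⟨c', hc.symm⟩

theorem infix_append_cases {t l₁ l₂ : Word S} (h : t <:+: l₁ ++ l₂) :
    t <:+: l₁ ∨ t <:+: l₂ ∨ ∃ t₁ t₂, t = t₁ ++ t₂ ∧ t₁ <:+ l₁ ∧ t₂ <+: l₂ := by
  obtain ⟨p, q, hpq⟩ := h
  rw [List.append_assoc] at hpq
  rcases List.append_eq_append_iff.mp hpq with ⟨a', ha, hb⟩ | ⟨c', hc, hd⟩
  · rcases List.append_eq_append_iff.mp hb with ⟨b', hb1, _⟩ | ⟨c'', hc1, hd1⟩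
    · exact Or.inl ⟨p, b', by rw [ha, hb1, List.append_assoc]⟩
    · exact Or.inr (Or.inr ⟨a', c'', hc1, ⟨p, ha.symm⟩, ⟨q, hd1.symm⟩⟩)
  · exact Or.inr (Or.inl ⟨c', q, by rw [hd, ← List.append_assoc]⟩)

theorem exists_last_occ {α : Type} (P : α → Prop) :
    ∀ (l : List α), (∃ x ∈ l, P x) →
      ∃ l₁ c l₂, l = l₁ ++ c :: l₂ ∧ P c ∧ ∀ x ∈ l₂, ¬ P x := by
  intro l
  induction l with
  | nil => rintro ⟨x, hx, -⟩; simp at hx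
  | cons d l ih =>
    intro hex
    by_cases h : ∃ x ∈ l, P x
    · obtain ⟨l₁, c, l₂, rfl, hc, hl₂⟩ := ih h
      exact ⟨d :: l₁, c, l₂, rfl, hc, hl₂⟩
    · obtain ⟨x, hx, hPx⟩ := hex
      have hxd : x = d := by
        rcases List.mem_cons.mp hx with h' | h'
        · exact h'
        · exact absurd ⟨x, h', hPx⟩ h
      exact ⟨[], d, l, rfl, hxd ▸ hPx, fun y hy hPy => h ⟨y, hy, hPy⟩⟩

theorem isRotation_iff_isRotated {u v : Word S} : IsRotation S u v ↔ v ~r u := by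
  constructor
  · rintro ⟨l₁, l₂, rfl, rfl⟩
    exact List.isRotated_append
  · intro h
    obtain ⟨n, hn, hrot⟩ := List.isRotated_iff_mod.mp h
    exact ⟨v.take n, v.drop n, (List.take_append_drop n v).symm,
      by rw [← List.rotate_eq_drop_append_take hn, hrot]⟩

theorem isRotation_trans {u v z : Word S} (h₁ : IsRotation S u v) (h₂ : IsRotation S v z) :
    IsRotation S u z :=
  isRotation_iff_isRotated.mpr
    ((isRotation_iff_isRotated.mp h₂).trans (isRotation_iff_isRotated.mp h₁))

theorem pow_rot_eq (l₁ l₂ : Word S) (n : ℕ) :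
    pow S (l₁ ++ l₂) (n + 1) = l₁ ++ pow S (l₂ ++ l₁) n ++ l₂ := by
  induction n with
  | zero => simp [pow_one', pow_zero']
  | succ n ih =>
    rw [pow_succ', ih, pow_succ' (l₂ ++ l₁)]
    simp [List.append_assoc]

theorem pow_rot_infix (l₁ l₂ : Word S) (n : ℕ) :
    pow S (l₂ ++ l₁) n <:+: pow S (l₁ ++ l₂) (n + 1) :=
  ⟨l₁, l₂, (pow_rot_eq l₁ l₂ n).symm⟩

theorem rot_pow_str {u v : Word S} (hr : IsRotation S u v)
    (hv : ∀ n, 1 ≤ n → IsStr S (pow S v n)) : ∀ n, 1 ≤ n → IsStr S (pow S u n) := by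
  obtain ⟨l₁, l₂, rfl, rfl⟩ := hr
  intro n hn
  have hne : (l₂ ++ l₁ : Word S) ≠ [] := by
    have h := (hv 1 le_rfl).1
    rw [pow_one'] at h
    simp only [ne_eq, List.append_eq_nil_iff, not_and] at h ⊢
    intro h2 h1
    exact h h1 h2
  exact str_infix (hv (n + 1) (by omega)) (pow_rot_infix l₁ l₂ n) (pow_ne_nil hne hn)

theorem pow_step (c : Syl S) (u' : Word S) (k : ℕ) :
    (u' ++ pow S (c :: u') k) ++ [c] = pow S (u' ++ [c]) (k + 1) := by
  induction k with
  | zero => simp [pow_one', pow_zero']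
  | succ k ih =>
    rw [pow_succ' (u' ++ [c]), ← ih, pow_succ' (c :: u')]
    simp [List.append_assoc]

theorem rot_pow {l₁ : Word S} : ∀ {u l₂ : Word S} {k : ℕ}, 1 ≤ k →
    l₁ ++ l₂ = pow S u k → ∃ v, v.length = u.length ∧ l₂ ++ l₁ = pow S v k := by
  induction l₁ with
  | nil =>
    intro u l₂ k hk h
    refine ⟨u, rfl, ?_⟩
    simpa using h
  | cons c l₁ ih =>
    intro u l₂ k hk h
    cases u with
    | nil => rw [pow_nil] at h; simp at h
    | cons c' u' =>
      obtain ⟨k', rfl⟩ : ∃ k', k = k' + 1 := ⟨k - 1, by omega⟩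
      rw [pow_succ'] at h
      simp only [List.cons_append, List.cons.injEq] at h
      obtain ⟨rfl, h2⟩ := h
      have h3 : l₁ ++ (l₂ ++ [c]) = pow S (u' ++ [c]) (k' + 1) := by
        rw [← List.append_assoc, h2, pow_step]
      obtain ⟨v, hlen, hv⟩ := ih (by omega) h3
      refine ⟨v, by simpa using hlen, ?_⟩
      rw [← hv]
      simp

end SA
namespace SA

variable {S : SAQuiver}

/-- Every all-direct or all-inverse infix of a power of `s = B a u` is an infix of `s ++ [B]`. -/
theorem mono_infix_pow {bb aa : S.A} {u t : Word S} {m : ℕ}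
    (hmono : (∀ x ∈ t, ∃ c, x = (Sum.inl c : Syl S)) ∨ (∀ x ∈ t, ∃ c, x = (Sum.inr c : Syl S)))
    (ht : t <:+: pow S (Sum.inr bb :: Sum.inl aa :: u) m) :
    t <:+: (Sum.inr bb :: Sum.inl aa :: u) ++ [Sum.inr bb] := by
  induction m with
  | zero =>
    rw [pow_zero'] at ht
    rw [List.infix_nil] at ht
    subst ht
    exact List.nil_infix
  | succ m ih =>
    rw [pow_succ'] at ht
    rcases infix_append_cases ht with h | h | ⟨t₁, t₂, rfl, h₁, h₂⟩
    · exact h.trans (List.prefix_append _ _).isInfix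
    · exact ih h
    · cases t₂ with
      | nil =>
        rw [List.append_nil]
        exact h₁.isInfix.trans (List.prefix_append _ _).isInfix
      | cons e t₂' =>
        cases m with
        | zero => rw [pow_zero'] at h₂; simp at h₂
        | succ m' =>
          rw [pow_succ'] at h₂
          rw [show (Sum.inr bb :: Sum.inl aa :: u : Word S) ++
              pow S (Sum.inr bb :: Sum.inl aa :: u) m' =
              Sum.inr bb :: Sum.inl aa ::
                (u ++ pow S (Sum.inr bb :: Sum.inl aa :: u) m') by simp] at h₂
          rw [List.cons_prefix_cons] at h₂
          obtain ⟨rfl, h₂⟩ := h₂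
          have hbr : (Sum.inr bb : Syl S) ∈ t₁ ++ Sum.inr bb :: t₂' := by simp
          have hallr : ∀ x ∈ t₁ ++ Sum.inr bb :: t₂', ∃ c, x = (Sum.inr c : Syl S) := by
            rcases hmono with hmono | hmono
            · obtain ⟨c, hc⟩ := hmono _ hbr
              simp at hc
            · exact hmono
          have ht₂' : t₂' = [] := by
            cases t₂' with
            | nil => rfl
            | cons f t₂'' =>
              rw [List.cons_prefix_cons] at h₂
              obtain ⟨rfl, -⟩ := h₂
              obtain ⟨c, hc⟩ := hallr (Sum.inl aa) (by simp)
              simp at hc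
          subst ht₂'
          obtain ⟨pp, hpp⟩ := h₁
          exact ⟨pp, [], by simp [← hpp]⟩

theorem walk_pow {s : Word S} {x : Syl S} (h : IsWalk S (s ++ [x])) (hh : s.head? = some x) :
    ∀ m, IsWalk S (pow S s m) := by
  intro m
  induction m with
  | zero => trivial
  | succ m ih =>
    rw [pow_succ']
    cases hm : pow S s m with
    | nil => rw [List.append_nil]; exact walk_append_left h
    | cons e r =>
      have he : e = x := by
        cases m with
        | zero => rw [pow_zero'] at hm; simp at hm
        | succ m' =>
          rw [pow_succ'] at hm
          cases s with
          | nil => simp at hh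
          | cons c s' =>
            simp only [List.head?_cons, Option.some.injEq] at hh
            rw [List.cons_append] at hm
            rw [← hh]
            exact (List.cons.inj hm).1.symm
      subst he
      exact walk_glue h (hm ▸ ih)

theorem red_pow {s : Word S} {x : Syl S} (h : Reduced S (s ++ [x])) (hh : s.head? = some x) :
    ∀ m, Reduced S (pow S s m) := by
  intro m
  induction m with
  | zero => trivial
  | succ m ih =>
    rw [pow_succ']
    cases hm : pow S s m with
    | nil => rw [List.append_nil]; exact red_append_left h
    | cons e r =>
      have he : e = x := by
        cases m with
        | zero => rw [pow_zero'] at hm; simp at hm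
        | succ m' =>
          rw [pow_succ'] at hm
          cases s with
          | nil => simp at hh
          | cons c s' =>
            simp only [List.head?_cons, Option.some.injEq] at hh
            rw [List.cons_append] at hm
            rw [← hh]
            exact (List.cons.inj hm).1.symm
      subst he
      exact red_glue h (hm ▸ ih)

theorem exists_primroot (s : Word S) (hne : s ≠ []) :
    ∃ t k, t ≠ [] ∧ 1 ≤ k ∧ s = pow S t k ∧ Primitive S t := by
  by_cases hp : Primitive S s
  · exact ⟨s, 1, hne, le_refl 1, (pow_one' s).symm, hp⟩
  · simp only [Primitive, not_not] at hp
    obtain ⟨u, k, hk, hs⟩ := hp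
    have hune : u ≠ [] := by
      rintro rfl
      rw [pow_nil] at hs
      exact hne hs
    obtain ⟨t, k₀, h1, h2, h3, h4⟩ := exists_primroot u hune
    refine ⟨t, k * k₀, h1, ?_, ?_, h4⟩
    · have := Nat.mul_le_mul hk h2; omega
    · rw [hs, h3, pow_mul']
termination_by s.length
decreasing_by
  have h1 : 1 ≤ u.length := List.length_pos_iff.mpr hune
  have h2 : 2 * u.length ≤ k * u.length := Nat.mul_le_mul_right _ hk
  rw [hs, length_pow]
  omega

end SA
namespace SA

variable {S : SAQuiver}

theorem band_of_t {t : Word S} {bb : S.A}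
    (hhead : t.head? = some (Sum.inr bb))
    (hinl : ∃ c : S.A, (Sum.inl c : Syl S) ∈ t)
    (hpows : ∀ n, 1 ≤ n → IsStr S (pow S t n))
    (hprim : Primitive S t) : RotOfBand S t := by
  obtain ⟨c, hc⟩ := hinl
  obtain ⟨l₁, e₀, l₂, hteq, ⟨c₀, rfl⟩, hl₂⟩ :=
    exists_last_occ (fun x : Syl S => ∃ cc, x = Sum.inl cc) t ⟨_, hc, ⟨c, rfl⟩⟩
  have hallr : ∀ x ∈ l₂, ∃ cc, x = (Sum.inr cc : Syl S) := by
    intro x hx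
    cases x with
    | inl cc => exact absurd ⟨cc, rfl⟩ (hl₂ _ hx)
    | inr cc => exact ⟨cc, rfl⟩
  have htm : t = (l₁ ++ [Sum.inl c₀]) ++ l₂ := by rw [hteq]; simp
  have hpows'' : ∀ n, 1 ≤ n → IsStr S (pow S (l₂ ++ (l₁ ++ [Sum.inl c₀])) n) :=
    rot_pow_str ⟨l₁ ++ [Sum.inl c₀], l₂, htm, rfl⟩ hpows
  have hne'' : (l₂ ++ (l₁ ++ [Sum.inl c₀]) : Word S) ≠ [] := by simp
  obtain ⟨h'', r'', hcons⟩ : ∃ h r, (l₂ ++ (l₁ ++ [Sum.inl c₀]) : Word S) = h :: r := by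
    cases ht : (l₂ ++ (l₁ ++ [Sum.inl c₀]) : Word S) with
    | nil => exact absurd ht hne''
    | cons h r => exact ⟨h, r, rfl⟩
  have hw2 : IsWalk S ((h'' :: r'') ++ h'' :: r'') := by
    have h2 := (hpows'' 2 (by omega)).2.1
    rwa [show pow S (l₂ ++ (l₁ ++ [Sum.inl c₀])) 2
        = (l₂ ++ (l₁ ++ [Sum.inl c₀])) ++ ((l₂ ++ (l₁ ++ [Sum.inl c₀])))
        by rw [pow_succ', pow_one'], hcons] at h2
  obtain ⟨e, he, het⟩ := walk_last (show (h'' :: r'' : Word S) ≠ [] by simp) hw2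
  have hcyc : Cyclic S (l₂ ++ (l₁ ++ [Sum.inl c₀])) := by
    refine ⟨hne'', ?_⟩
    rw [hcons]
    simp only [wSrc, wTgt]
    rw [he]
    simp [het]
  have hprim'' : Primitive S (l₂ ++ (l₁ ++ [Sum.inl c₀])) := by
    rintro ⟨v, k₀, hk₀, hv⟩
    obtain ⟨v', -, hv'⟩ := rot_pow (show 1 ≤ k₀ by omega) hv
    exact hprim ⟨v', k₀, hk₀, htm.trans hv'⟩
  have hlast'' : (l₂ ++ (l₁ ++ [Sum.inl c₀]) : Word S).getLast? = some (Sum.inl c₀) := by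
    rw [← List.append_assoc]
    exact List.getLast?_concat
  have hhead'' : ∃ cc, (l₂ ++ (l₁ ++ [Sum.inl c₀]) : Word S).head? = some (Sum.inr cc) := by
    cases hl : l₂ with
    | nil =>
      refine ⟨bb, ?_⟩
      rw [List.nil_append]
      rw [hl, List.append_nil] at htm
      rw [← htm]
      exact hhead
    | cons e' l₂' =>
      obtain ⟨cc, hcc⟩ := hallr e' (by rw [hl]; simp)
      exact ⟨cc, by rw [hcc]; simp⟩
  obtain ⟨cc, hh''⟩ := hhead''
  refine ⟨l₂ ++ (l₁ ++ [Sum.inl c₀]),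
    ⟨?_, hcyc, hprim'', ⟨cc, hh''⟩, ⟨c₀, hlast''⟩, hpows''⟩,
    ⟨l₂, l₁ ++ [Sum.inl c₀], rfl, htm⟩⟩
  have h1 := hpows'' 1 le_rfl
  rwa [pow_one'] at h1

theorem seg_rotband {Wd u : Word S} {aa bb : S.A} (hW : IsStr S Wd)
    (hinf : (Sum.inr bb :: Sum.inl aa :: u) ++ [Sum.inr bb] <:+: Wd) :
    ∃ t k, 1 ≤ k ∧ (Sum.inr bb :: Sum.inl aa :: u : Word S) = pow S t k ∧ RotOfBand S t := by
  have hsb : IsStr S ((Sum.inr bb :: Sum.inl aa :: u) ++ [Sum.inr bb]) :=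
    str_infix hW hinf (by simp)
  have hshead : (Sum.inr bb :: Sum.inl aa :: u : Word S).head? = some (Sum.inr bb) := rfl
  have hpows : ∀ m, 1 ≤ m → IsStr S (pow S (Sum.inr bb :: Sum.inl aa :: u) m) := by
    intro m hm
    refine ⟨pow_ne_nil (by simp) hm, walk_pow hsb.2.1 hshead m,
      red_pow hsb.2.2.1 hshead m, ?_⟩
    intro p hp
    constructor
    · intro hcon
      refine (hW.2.2.2 p hp).1 ((mono_infix_pow (Or.inl ?_) hcon).trans hinf)
      intro x hx
      obtain ⟨cc, -, rfl⟩ := List.mem_map.mp hx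
      exact ⟨cc, rfl⟩
    · intro hcon
      refine (hW.2.2.2 p hp).2 ((mono_infix_pow (Or.inr ?_) hcon).trans hinf)
      intro x hx
      rw [List.mem_reverse] at hx
      obtain ⟨cc, -, rfl⟩ := List.mem_map.mp hx
      exact ⟨cc, rfl⟩
  obtain ⟨t, k, htne, hk, hseq, hprim⟩ :=
    exists_primroot (Sum.inr bb :: Sum.inl aa :: u) (by simp)
  obtain ⟨k', rfl⟩ : ∃ k', k = k' + 1 := ⟨k - 1, by omega⟩
  have hthead : t.head? = some (Sum.inr bb) := by
    rw [pow_succ'] at hseq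
    cases t with
    | nil => exact absurd rfl htne
    | cons e t' =>
      rw [List.cons_append] at hseq
      rw [List.head?_cons]
      exact congrArg some (List.cons.inj hseq).1.symm
  have htinl : (Sum.inl aa : Syl S) ∈ t := mem_pow (by rw [← hseq]; simp)
  have htpows : ∀ n, 1 ≤ n → IsStr S (pow S t n) := by
    intro n hn
    have h1 : pow S t n <+: pow S t (n * (k' + 1)) :=
      pow_prefix_pow t (Nat.le_mul_of_pos_right n (by omega))
    have h2 : pow S (Sum.inr bb :: Sum.inl aa :: u) n = pow S t (n * (k' + 1)) := by
      rw [hseq, pow_mul']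
    rw [← h2] at h1
    exact str_infix (hpows n hn) h1.isInfix (pow_ne_nil htne hn)
  exact ⟨t, k' + 1, by omega, hseq, band_of_t hthead ⟨aa, htinl⟩ htpows hprim⟩

end SA
open SA in
/-- If `pb` is a prime band and `aB` is a string (for arrows `a`, `b`), then no cyclic
permutation of `pb` contains the substring `aB` more than once. -/
theorem prime_band_contains_aB_at_most_once (S : SAQuiver) (hSA : SA.IsStringAlgebra S)
    (pb : Word S) (hpb : IsPrimeBand S pb) (a b : S.A)
    (hab : IsStr S [Sum.inr b, Sum.inl a]) :
    ∀ w : Word S, IsRotation S w pb →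
      ¬ ∃ x y z : Word S,
          w = x ++ [Sum.inr b, Sum.inl a] ++ y ++ [Sum.inr b, Sum.inl a] ++ z := by
  rintro w hrot ⟨x, y, z, rfl⟩
  have hrotw' : IsRotation S
      ((Sum.inr b :: Sum.inl a :: y) ++ (Sum.inr b :: Sum.inl a :: (z ++ x)))
      (x ++ [Sum.inr b, Sum.inl a] ++ y ++ [Sum.inr b, Sum.inl a] ++ z) :=
    ⟨x, [Sum.inr b, Sum.inl a] ++ y ++ [Sum.inr b, Sum.inl a] ++ z, by simp, by simp⟩
  have hrot' : IsRotation S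
      ((Sum.inr b :: Sum.inl a :: y) ++ (Sum.inr b :: Sum.inl a :: (z ++ x))) pb :=
    isRotation_trans hrotw' hrot
  have hw'pows := rot_pow_str hrot' hpb.1.2.2.2.2.2
  have hW : IsStr S (pow S
      ((Sum.inr b :: Sum.inl a :: y) ++ (Sum.inr b :: Sum.inl a :: (z ++ x))) 2) :=
    hw'pows 2 (by omega)
  have hinf₁ : (Sum.inr b :: Sum.inl a :: y) ++ [Sum.inr b] <:+: pow S
      ((Sum.inr b :: Sum.inl a :: y) ++ (Sum.inr b :: Sum.inl a :: (z ++ x))) 2 :=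
    ⟨[], Sum.inl a :: (z ++ x) ++
        ((Sum.inr b :: Sum.inl a :: y) ++ (Sum.inr b :: Sum.inl a :: (z ++ x))),
      by rw [pow_succ', pow_one']; simp⟩
  have hinf₂ : (Sum.inr b :: Sum.inl a :: (z ++ x)) ++ [Sum.inr b] <:+: pow S
      ((Sum.inr b :: Sum.inl a :: y) ++ (Sum.inr b :: Sum.inl a :: (z ++ x))) 2 :=
    ⟨Sum.inr b :: Sum.inl a :: y,
      Sum.inl a :: y ++ (Sum.inr b :: Sum.inl a :: (z ++ x)),
      by rw [pow_succ', pow_one']; simp⟩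
  obtain ⟨t₁, k₁, hk₁, he₁, hb₁⟩ := seg_rotband hW hinf₁
  obtain ⟨t₂, k₂, hk₂, he₂, hb₂⟩ := seg_rotband hW hinf₂
  refine hpb.2 ⟨_, List.replicate k₁ t₁ ++ List.replicate k₂ t₂, hrot',
    by simp; omega, ?_, ?_⟩
  · rw [List.flatten_append]
    show _ = pow S t₁ k₁ ++ pow S t₂ k₂
    rw [← he₁, ← he₂]
  · intro p hp
    rcases List.mem_append.mp hp with h | h
    · rwa [List.eq_of_mem_replicate h]
    · rwa [List.eq_of_mem_replicate h]
end

section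
/- Let u = α_n...α_1 be a mixed cyclic string (containing both direct and inverse syllables, with t(α_n) = s(α_1)). Then u^n is a string for all n ≥ 2 if and only if u² is a string. -/
/-- Any infix of the `n`-fold concatenation of `u` either contains `u` as an infix,
or is an infix of `u ++ u`. -/
theorem infix_flatten_replicate {α : Type*} (u : List α) :
    ∀ (n : ℕ) (q : List α), q <:+: (List.replicate n u).flatten →
      u <:+: q ∨ q <:+: u ++ u := by
  intro n
  induction n with
  | zero =>
    intro q h
    simp only [List.replicate, List.flatten_nil] at h
    rw [List.infix_nil] at h
    subst h
    exact Or.inr List.nil_infix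
  | succ m ih =>
    intro q h
    rw [List.replicate_succ, List.flatten_cons] at h
    obtain ⟨s, t, hst⟩ := h
    by_cases hle : u.length ≤ s.length
    · -- the infix starts after the first copy
      have hs : s <+: u ++ (List.replicate m u).flatten := ⟨q ++ t, by simpa using hst⟩
      have hu : u <+: s :=
        List.prefix_of_prefix_length_le (List.prefix_append _ _) hs hle
      obtain ⟨s', rfl⟩ := hu
      have : s' ++ q ++ t = (List.replicate m u).flatten := by
        apply List.append_cancel_left (as := u)
        simpa [List.append_assoc] using hst
      exact ih q ⟨s', t, this⟩
    · push_neg at hle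
      by_cases h2 : (s ++ q).length ≤ u.length
      · -- entirely inside the first copy
        have hsq : s ++ q <+: u ++ (List.replicate m u).flatten :=
          ⟨t, by simpa [List.append_assoc] using hst⟩
        have : s ++ q <+: u :=
          List.prefix_of_prefix_length_le hsq (List.prefix_append _ _) h2
        obtain ⟨r, hr⟩ := this
        have : q <:+: u := ⟨s, r, by simpa [List.append_assoc] using hr⟩
        exact Or.inr (this.trans ⟨[], u, by simp⟩)
      · push_neg at h2
        -- q starts in the first copy and goes beyond it
        have hsq : s ++ q <+: u ++ (List.replicate m u).flatten :=
          ⟨t, by simpa [List.append_assoc] using hst⟩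
        have hu : u <+: s ++ q :=
          List.prefix_of_prefix_length_le (List.prefix_append _ _) hsq h2.le
        obtain ⟨w, hw⟩ := hu
        have hq : q = u.drop s.length ++ w := by
          have := congrArg (List.drop s.length) hw
          rw [List.drop_append_of_le_length hle.le, List.drop_left] at this
          exact this.symm
        have hwt : w ++ t = (List.replicate m u).flatten := by
          apply List.append_cancel_left (as := u)
          rw [← List.append_assoc, hw]
          exact hst
        match m with
        | 0 =>
          have : w = [] := by
            have := hwt
            simp only [List.replicate, List.flatten_nil] at this
            exact (List.append_eq_nil_iff.mp this).1
          subst this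
          refine Or.inr ⟨u ++ u.take s.length, [], ?_⟩
          rw [hq]
          simp [List.append_assoc]
        | k + 1 =>
          rw [List.replicate_succ, List.flatten_cons] at hwt
          have hwpre : w <+: u ++ (List.replicate k u).flatten := ⟨t, hwt⟩
          rcases le_or_gt w.length u.length with hwl | hwl
          · have hwu : w <+: u :=
              List.prefix_of_prefix_length_le hwpre (List.prefix_append _ _) hwl
            obtain ⟨r, hr⟩ := hwu
            refine Or.inr ⟨u.take s.length, r, ?_⟩
            rw [hq, List.append_assoc, List.append_assoc, hr, ← List.append_assoc,
              List.take_append_drop]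
          · have huw : u <+: w :=
              List.prefix_of_prefix_length_le (List.prefix_append _ _) hwpre hwl.le
            obtain ⟨r, hr⟩ := huw
            refine Or.inl ⟨u.drop s.length, r, by
              rw [hq, ← hr]; exact List.append_assoc _ _ _⟩

namespace SA

theorem isWalk_iff_chain' (S : SAQuiver) :
    ∀ w : Word S, IsWalk S w ↔ List.Chain' (fun x y => sylTgt S x = sylSrc S y) w
  | [] => by simp [IsWalk, List.Chain']
  | [_] => by simp [IsWalk, List.Chain']
  | x :: y :: l => by
    simp [IsWalk, List.Chain', List.isChain_cons_cons, isWalk_iff_chain' S (y :: l)]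

theorem reduced_iff_chain' (S : SAQuiver) :
    ∀ w : Word S, Reduced S w ↔ List.Chain' (fun x y => y ≠ sylInv S x) w
  | [] => by simp [Reduced, List.Chain']
  | [_] => by simp [Reduced, List.Chain']
  | x :: y :: l => by
    simp [Reduced, List.Chain', List.isChain_cons_cons, reduced_iff_chain' S (y :: l)]

theorem pow_succ_eq (S : SAQuiver) (u : Word S) (n : ℕ) :
    pow S u (n + 1) = u ++ pow S u n := by
  simp [pow, List.replicate_succ]

theorem pow_two_eq (S : SAQuiver) (u : Word S) : pow S u 2 = u ++ u := by
  simp [pow, List.replicate]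

theorem chain'_pow (S : SAQuiver) {u : Word S} (hne : u ≠ []) {R : Syl S → Syl S → Prop}
    (h : List.Chain' R (u ++ u)) : ∀ n, List.Chain' R (pow S u n)
  | 0 => by simp [pow, List.Chain']
  | n + 1 => by
    rw [pow_succ_eq, List.Chain', List.isChain_append]
    refine ⟨(List.isChain_append.mp h).1, chain'_pow S hne h n, ?_⟩
    intro x hx y hy
    cases n with
    | zero => simp [pow] at hy
    | succ m =>
      rw [pow_succ_eq, List.head?_append_of_ne_nil _ hne] at hy
      exact (List.isChain_append.mp h).2.2 x hx y hy

end SA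

open SA in
/-- For a mixed cyclic string `u`, all powers `u^n` (`n ≥ 2`) are strings if and only if
`u²` is a string. -/
theorem mixed_cyclic_powers_iff_square (S : SAQuiver) (hSA : SA.IsStringAlgebra S)
    (u : Word S) (hu : IsStr S u) (hc : Cyclic S u) (hm : Mixed S u) :
    (∀ n : ℕ, 2 ≤ n → IsStr S (pow S u n)) ↔ IsStr S (pow S u 2) := by
  constructor
  · intro h
    exact h 2 le_rfl
  · intro h2 n hn
    obtain ⟨m, rfl⟩ : ∃ m, n = m + 1 := ⟨n - 1, by omega⟩
    have hune : u ≠ [] := hu.1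
    obtain ⟨_, hwalk2, hred2, hrel2⟩ := h2
    rw [pow_two_eq] at hwalk2 hred2 hrel2
    refine ⟨?_, ?_, ?_, ?_⟩
    · rw [pow_succ_eq]
      simp [hune]
    · rw [isWalk_iff_chain']
      exact chain'_pow S hune ((isWalk_iff_chain' S _).mp hwalk2) _
    · rw [reduced_iff_chain']
      exact chain'_pow S hune ((reduced_iff_chain' S _).mp hred2) _
    · intro p hp
      constructor
      · intro hinf
        rcases infix_flatten_replicate u (m + 1) _ hinf with h | h
        · obtain ⟨a, ha⟩ := hm.2
          have : Sum.inr a ∈ p.map (Sum.inl : S.A → Syl S) := h.subset ha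
          simp at this
        · exact (hrel2 p hp).1 h
      · intro hinf
        rcases infix_flatten_replicate u (m + 1) _ hinf with h | h
        · obtain ⟨a, ha⟩ := hm.1
          have : Sum.inl a ∈ (p.map (Sum.inr : S.A → Syl S)).reverse := h.subset ha
          simp at this
        · exact (hrel2 p hp).2 h
end

section
/- Let Λ be a string algebra and let v be a vertex of its quiver. The set H_r(v) of strings u with t(u) = v and ε(u) = 1, equipped with the relation u <_r v defined by: (1) v = u a x for an arrow a and string x, or (2) u = v B y for an arrow b and string y, or (3) v = z a x and u = z B y for arrows a, b and strings x, y, z — is a total (linear) order. -/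
section ListAux

variable {α : Type*}

lemma ext_ne (z : List α) (c : α) (w : List α) : z ++ c :: w ≠ z := by
  intro h
  have := congrArg List.length h
  simp at this

lemma stepKey : ∀ (p₁ p₂ : List α) (s₁ s₂ : α) (t₁ t₂ : List α),
    p₁ ++ s₁ :: t₁ = p₂ ++ s₂ :: t₂ →
    (p₁ = p₂ ∧ s₁ = s₂ ∧ t₁ = t₂) ∨ (∃ w, p₂ = p₁ ++ s₁ :: w) ∨ (∃ w, p₁ = p₂ ++ s₂ :: w)
  | [], [], s₁, s₂, t₁, t₂, h => by
      simp only [List.nil_append, List.cons.injEq] at h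
      exact Or.inl ⟨rfl, h.1, h.2⟩
  | [], q :: p₂, s₁, s₂, t₁, t₂, h => by
      simp only [List.nil_append, List.cons_append, List.cons.injEq] at h
      exact Or.inr (Or.inl ⟨p₂, by simp [h.1]⟩)
  | q :: p₁, [], s₁, s₂, t₁, t₂, h => by
      simp only [List.nil_append, List.cons_append, List.cons.injEq] at h
      exact Or.inr (Or.inr ⟨p₁, by simp [h.1]⟩)
  | q₁ :: p₁, q₂ :: p₂, s₁, s₂, t₁, t₂, h => by
      simp only [List.cons_append, List.cons.injEq] at h
      obtain ⟨rfl, h2⟩ := h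
      rcases stepKey p₁ p₂ s₁ s₂ t₁ t₂ h2 with ⟨rfl, rfl, rfl⟩ | ⟨w, hw⟩ | ⟨w, hw⟩
      · exact Or.inl ⟨rfl, rfl, rfl⟩
      · exact Or.inr (Or.inl ⟨w, by simp [hw]⟩)
      · exact Or.inr (Or.inr ⟨w, by simp [hw]⟩)

lemma firstDiff : ∀ (r r' : List α),
    r <+: r' ∨ r' <+: r ∨
      ∃ (z : List α) (s₁ s₂ : α) (t t' : List α),
        s₁ ≠ s₂ ∧ r = z ++ s₁ :: t ∧ r' = z ++ s₂ :: t'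
  | [], _ => Or.inl (List.nil_prefix)
  | _ :: _, [] => Or.inr (Or.inl (List.nil_prefix))
  | q :: r, q' :: r' => by
      by_cases hq : q = q'
      · subst hq
        rcases firstDiff r r' with ⟨t, ht⟩ | ⟨t, ht⟩ | ⟨z, s₁, s₂, t, t', hne, h1, h2⟩
        · exact Or.inl ⟨t, by simp [ht]⟩
        · exact Or.inr (Or.inl ⟨t, by simp [ht]⟩)
        · exact Or.inr (Or.inr ⟨q :: z, s₁, s₂, t, t', hne, by simp [h1], by simp [h2]⟩)
      · exact Or.inr (Or.inr ⟨[], q, q', r, r', hq, rfl, rfl⟩)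

end ListAux

namespace SA

variable (S : SAQuiver)

/-- The reversed-list version of `ltr`. -/
def Rlt (r r' : Word S) : Prop :=
  ∃ z : Word S, (r = z ∨ ∃ b y, r = z ++ Sum.inr b :: y) ∧
    (r' = z ∨ ∃ a x, r' = z ++ Sum.inl a :: x) ∧ (r ≠ z ∨ r' ≠ z)

lemma rlt_trans {r r' r'' : Word S} (h1 : Rlt S r r') (h2 : Rlt S r' r'') :
    Rlt S r r'' := by
  obtain ⟨z₁, hr, hm1, hne₁⟩ := h1
  obtain ⟨z₂, hm2, hr'', hne₂⟩ := h2
  rcases hm1 with hm1 | ⟨a₁, x₁, hm1⟩ <;> rcases hm2 with hm2 | ⟨b₂, y₂, hm2⟩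
  · -- r' = z₁ = z₂
    rw [hm1] at hm2
    subst hm2
    refine ⟨z₁, hr, hr'', Or.inl ?_⟩
    rcases hne₁ with h | h
    · exact h
    · exact absurd hm1 h
  · -- r' = z₁ and r' = z₂ ++ inr b₂ :: y₂
    rw [hm1] at hm2
    refine ⟨z₂, Or.inr ?_, hr'', Or.inl ?_⟩
    · rcases hr with rfl | ⟨b₁, y₁, rfl⟩
      · exact ⟨b₂, y₂, hm2⟩
      · exact ⟨b₂, y₂ ++ Sum.inr b₁ :: y₁, by rw [hm2]; simp⟩
    · rcases hr with rfl | ⟨b₁, y₁, rfl⟩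
      · exact hm2 ▸ ext_ne _ _ _
      · rw [hm2]
        simpa using ext_ne z₂ (Sum.inr b₂) (y₂ ++ Sum.inr b₁ :: y₁)
  · -- r' = z₁ ++ inl a₁ :: x₁ and r' = z₂
    rw [hm2] at hm1
    refine ⟨z₁, hr, Or.inr ?_, Or.inr ?_⟩
    · rcases hr'' with rfl | ⟨a₂, x₂, rfl⟩
      · exact ⟨a₁, x₁, hm1⟩
      · exact ⟨a₁, x₁ ++ Sum.inl a₂ :: x₂, by rw [hm1]; simp⟩
    · rcases hr'' with rfl | ⟨a₂, x₂, rfl⟩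
      · exact hm1 ▸ ext_ne _ _ _
      · rw [hm1]
        simpa using ext_ne z₁ (Sum.inl a₁) (x₁ ++ Sum.inl a₂ :: x₂)
  · -- both middles extended
    rw [hm1] at hm2
    rcases stepKey z₁ z₂ (Sum.inl a₁) (Sum.inr b₂) x₁ y₂ hm2 with ⟨rfl, hs, rfl⟩ | ⟨w, hw⟩ | ⟨w, hw⟩
    · exact absurd hs (by simp)
    · -- z₂ = z₁ ++ inl a₁ :: w
      refine ⟨z₁, hr, Or.inr ?_, Or.inr ?_⟩
      · rcases hr'' with rfl | ⟨a₂, x₂, rfl⟩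
        · exact ⟨a₁, w, hw⟩
        · exact ⟨a₁, w ++ Sum.inl a₂ :: x₂, by rw [hw]; simp⟩
      · rcases hr'' with rfl | ⟨a₂, x₂, rfl⟩
        · exact hw ▸ ext_ne _ _ _
        · rw [hw]
          simpa using ext_ne z₁ (Sum.inl a₁) (w ++ Sum.inl a₂ :: x₂)
    · -- z₁ = z₂ ++ inr b₂ :: w
      refine ⟨z₂, Or.inr ?_, hr'', Or.inl ?_⟩
      · rcases hr with rfl | ⟨b₁, y₁, rfl⟩
        · exact ⟨b₂, w, hw⟩
        · exact ⟨b₂, w ++ Sum.inr b₁ :: y₁, by rw [hw]; simp⟩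
      · rcases hr with rfl | ⟨b₁, y₁, rfl⟩
        · exact hw ▸ ext_ne _ _ _
        · rw [hw]
          simpa using ext_ne z₂ (Sum.inr b₂) (w ++ Sum.inr b₁ :: y₁)

lemma rlt_irrefl (r : Word S) : ¬ Rlt S r r := by
  rintro ⟨z, h1, h2, h3⟩
  rcases h1 with rfl | ⟨b, y, hb⟩
  · exact h3.elim (fun h => h rfl) (fun h => h rfl)
  · rcases h2 with rfl | ⟨a, x, ha⟩
    · exact ext_ne _ _ _ hb.symm
    · rw [hb] at ha
      have := List.append_cancel_left ha
      simp at this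

lemma ltr_iff (u u' : Word S) : ltr S u u' ↔ Rlt S u.reverse u'.reverse := by
  constructor
  · rintro (⟨a, x, h⟩ | ⟨b, y, h⟩ | ⟨a, b, x, y, z, h1, h2⟩)
    · exact ⟨u.reverse, Or.inl rfl, Or.inr ⟨a, x.reverse, by rw [h]; simp⟩,
        Or.inr (by rw [h]; simp)⟩
    · exact ⟨u'.reverse, Or.inr ⟨b, y.reverse, by rw [h]; simp⟩, Or.inl rfl,
        Or.inl (by rw [h]; simp)⟩
    · refine ⟨z.reverse, Or.inr ⟨b, y.reverse, by rw [h2]; simp⟩,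
        Or.inr ⟨a, x.reverse, by rw [h1]; simp⟩, Or.inl ?_⟩
      rw [h2]; simp
  · rintro ⟨z, h1, h2, h3⟩
    rcases h1 with h1 | ⟨b, y, h1⟩
    · rcases h2 with h2 | ⟨a, x, h2⟩
      · exfalso; rcases h3 with h | h
        · exact h h1
        · exact h h2
      · refine Or.inl ⟨a, x.reverse, ?_⟩
        rw [← List.reverse_reverse u', h2, ← h1]
        simp
    · rcases h2 with h2 | ⟨a, x, h2⟩
      · refine Or.inr (Or.inl ⟨b, y.reverse, ?_⟩)
        rw [← List.reverse_reverse u, h1, ← h2]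
        simp
      · refine Or.inr (Or.inr ⟨a, b, x.reverse, y.reverse, z.reverse, ?_, ?_⟩)
        · rw [← List.reverse_reverse u', h2]; simp
        · rw [← List.reverse_reverse u, h1]; simp

end SA

namespace SA

variable (S : SAQuiver)

lemma isWalk_iff : ∀ w : Word S, IsWalk S w ↔ List.Chain' (fun x y => sylTgt S x = sylSrc S y) w
  | [] => by simp [IsWalk, List.Chain']
  | [x] => by simp [IsWalk, List.Chain']
  | x :: y :: l => by
      simp only [List.Chain', List.isChain_cons_cons]
      exact and_congr Iff.rfl (isWalk_iff (y :: l))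

lemma reduced_iff : ∀ w : Word S, Reduced S w ↔ List.Chain' (fun x y => y ≠ sylInv S x) w
  | [] => by simp [Reduced, List.Chain']
  | [x] => by simp [Reduced, List.Chain']
  | x :: y :: l => by
      simp only [List.Chain', List.isChain_cons_cons]
      exact and_congr Iff.rfl (reduced_iff (y :: l))

lemma isStr_infix {w l : Word S} (hw : IsStr S w) (h : l <:+: w) (hne : l ≠ []) :
    IsStr S l := by
  obtain ⟨-, hwalk, hred, havoid⟩ := hw
  refine ⟨hne, ?_, ?_, fun p hp => ⟨fun hc => (havoid p hp).1 (hc.trans h),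
    fun hc => (havoid p hp).2 (hc.trans h)⟩⟩
  · exact (isWalk_iff S l).2 (((isWalk_iff S w).1 hwalk).infix h)
  · exact (reduced_iff S l).2 (((reduced_iff S w).1 hred).infix h)

lemma isStr_pair_of_infix {w : Word S} {x y : Syl S} (hw : IsStr S w)
    (h : [x, y] <:+: w) : sylTgt S x = sylSrc S y ∧ y ≠ sylInv S x := by
  have h2 := isStr_infix S hw h (by simp)
  exact ⟨h2.2.1.1, h2.2.2.1.1⟩

lemma isStr_of_inr_pair {w : Word S} {a c : S.A}
    (hrel : ∀ p ∈ S.rel, p ≠ []) (hw : IsStr S w)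
    (hinf : [Sum.inr a, Sum.inr c] <:+: w) : IsStr S [Sum.inl c, Sum.inl a] := by
  obtain ⟨hwalk, -⟩ := isStr_pair_of_infix S hw hinf
  refine ⟨by simp, ⟨?_, trivial⟩, ⟨by simp [sylInv], trivial⟩, ?_⟩
  · simp only [sylTgt, sylSrc] at hwalk ⊢
    exact hwalk.symm
  · intro p hp
    constructor
    · intro hc
      have hplen : p.length ≤ 2 := by simpa using hc.length_le
      have hpne := hrel p hp
      have havoid := (hw.2.2.2 p hp).2
      obtain _ | ⟨q₁, _ | ⟨q₂, _ | ⟨q₃, ps⟩⟩⟩ := p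
      · exact hpne rfl
      · have : Sum.inl q₁ ∈ [Sum.inl c, Sum.inl a] := hc.subset (by simp)
        simp only [List.mem_cons, List.mem_singleton, Sum.inl.injEq] at this
        apply havoid
        rcases this with rfl | rfl | h
        · exact List.IsInfix.trans ⟨[Sum.inr a], [], by simp⟩ hinf
        · exact List.IsInfix.trans ⟨[], [Sum.inr c], by simp⟩ hinf
        · simp at h
      · have := hc.sublist.eq_of_length (by simp)
        simp only [List.map_cons, List.map_nil, List.cons.injEq, Sum.inl.injEq] at this
        obtain ⟨rfl, rfl, -⟩ := this
        apply havoid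
        simpa using hinf
      · simp at hplen
    · intro hc
      obtain ⟨q, hq⟩ := List.exists_mem_of_ne_nil p (hrel p hp)
      have : Sum.inr q ∈ [Sum.inl c, Sum.inl a] := hc.subset (by simp [hq])
      simp at this

lemma sign_not_both_inl {σ ε : S.A → ℤ} (hSA : IsStringAlgebra S) (hσε : SignOK S σ ε)
    {v : S.V} {u u' : Word S} (hu : HrMem S σ ε v u) (hu' : HrMem S σ ε v u')
    {a b : S.A} {y x z : Word S} (hne : a ≠ b)
    (h1 : u = y ++ Sum.inl a :: z) (h2 : u' = x ++ Sum.inl b :: z) : False := by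
  rcases hu with h | ⟨hstr, htgt, s, hlast, heps⟩
  · rw [h1] at h; simp at h
  rcases hu' with h | ⟨hstr', htgt', s', hlast', heps'⟩
  · rw [h2] at h; simp at h
  obtain _ | ⟨c, z⟩ := z
  · -- z = []
    rw [h1, List.getLast?_concat] at hlast
    obtain rfl : s = Sum.inl a := by injection hlast with h; exact h.symm
    rw [h2, List.getLast?_concat] at hlast'
    obtain rfl : s' = Sum.inl b := by injection hlast' with h; exact h.symm
    rw [h1] at htgt; rw [h2] at htgt'
    simp only [wTgt, List.getLast?_concat, Option.map_some, sylTgt, Option.some.injEq]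
      at htgt htgt'
    simp only [sylEp] at heps heps'
    have := hσε.2.2.2.1 a b hne (htgt.trans htgt'.symm)
    omega
  · -- z = c :: z'
    have hiu : [Sum.inl a, c] <:+: u := ⟨y, z, by rw [h1]; simp⟩
    have hiu' : [Sum.inl b, c] <:+: u' := ⟨x, z, by rw [h2]; simp⟩
    obtain (c | c) := c
    · exact hSA.2.2.2.2.2.2.2 c a b hne (isStr_infix S hstr hiu (by simp))
        (isStr_infix S hstr' hiu' (by simp))
    · obtain ⟨p1, q1⟩ := isStr_pair_of_infix S hstr hiu
      obtain ⟨p2, q2⟩ := isStr_pair_of_infix S hstr' hiu'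
      simp only [sylTgt, sylSrc] at p1 p2
      simp only [sylInv, ne_eq, Sum.inr.injEq] at q1 q2
      exact hSA.2.2.2.2.2.1 (S.tgt c) ⟨a, b, c, hne, fun h => q2 h.symm,
        fun h => q1 h.symm, p1, p2, rfl⟩

lemma sign_not_both_inr {σ ε : S.A → ℤ} (hSA : IsStringAlgebra S) (hσε : SignOK S σ ε)
    {v : S.V} {u u' : Word S} (hu : HrMem S σ ε v u) (hu' : HrMem S σ ε v u')
    {a b : S.A} {y x z : Word S} (hne : a ≠ b)
    (h1 : u = y ++ Sum.inr a :: z) (h2 : u' = x ++ Sum.inr b :: z) : False := by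
  rcases hu with h | ⟨hstr, htgt, s, hlast, heps⟩
  · rw [h1] at h; simp at h
  rcases hu' with h | ⟨hstr', htgt', s', hlast', heps'⟩
  · rw [h2] at h; simp at h
  obtain _ | ⟨c, z⟩ := z
  · -- z = []
    rw [h1, List.getLast?_concat] at hlast
    obtain rfl : s = Sum.inr a := by injection hlast with h; exact h.symm
    rw [h2, List.getLast?_concat] at hlast'
    obtain rfl : s' = Sum.inr b := by injection hlast' with h; exact h.symm
    rw [h1] at htgt; rw [h2] at htgt'
    simp only [wTgt, List.getLast?_concat, Option.map_some, sylTgt, Option.some.injEq]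
      at htgt htgt'
    simp only [sylEp] at heps heps'
    have := hσε.2.2.1 a b hne (htgt.trans htgt'.symm)
    omega
  · -- z = c :: z'
    have hiu : [Sum.inr a, c] <:+: u := ⟨y, z, by rw [h1]; simp⟩
    have hiu' : [Sum.inr b, c] <:+: u' := ⟨x, z, by rw [h2]; simp⟩
    obtain (c | c) := c
    · obtain ⟨p1, q1⟩ := isStr_pair_of_infix S hstr hiu
      obtain ⟨p2, q2⟩ := isStr_pair_of_infix S hstr' hiu'
      simp only [sylTgt, sylSrc] at p1 p2
      simp only [sylInv, ne_eq, Sum.inl.injEq] at q1 q2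
      exact hSA.2.2.2.2.1 (S.src c) ⟨a, b, c, hne, fun h => q2 h.symm,
        fun h => q1 h.symm, p1, p2, rfl⟩
    · have hrelne : ∀ p ∈ S.rel, p ≠ [] := fun p hp => (hSA.2.2.1 p hp).1
      exact hSA.2.2.2.2.2.2.1 c a b hne (isStr_of_inr_pair S hrelne hstr hiu)
        (isStr_of_inr_pair S hrelne hstr' hiu')

end SA

open SA in
/-- The hammock `H_r(v)` with the relation `<_r` is a total (linear) order: `<_r` is
transitive, irreflexive, and any two distinct elements are comparable. -/
theorem hammock_Hr_total_order (S : SAQuiver) (hSA : SA.IsStringAlgebra S)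
    (σ ε : S.A → ℤ) (hσε : SignOK S σ ε) (v : S.V) :
    (∀ u u' u'' : Word S, HrMem S σ ε v u → HrMem S σ ε v u' → HrMem S σ ε v u'' →
        ltr S u u' → ltr S u' u'' → ltr S u u'') ∧
    (∀ u : Word S, HrMem S σ ε v u → ¬ ltr S u u) ∧
    (∀ u u' : Word S, HrMem S σ ε v u → HrMem S σ ε v u' → u ≠ u' →
        (ltr S u u' ∨ ltr S u' u)) := by
  refine ⟨?_, ?_, ?_⟩
  · intro u u' u'' _ _ _ h1 h2
    rw [ltr_iff] at h1 h2 ⊢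
    exact rlt_trans S h1 h2
  · intro u _ h
    rw [ltr_iff] at h
    exact rlt_irrefl S _ h
  · intro u u' hu hu' hne
    rcases firstDiff u.reverse u'.reverse with ⟨t, ht⟩ | ⟨t, ht⟩ |
      ⟨z, s₁, s₂, t, t', hsne, h1, h2⟩
    · obtain _ | ⟨s, t⟩ := t
      · exact absurd (List.reverse_injective (by simpa using ht)) hne
      · obtain (a | b) := s
        · exact Or.inl ((ltr_iff S u u').2 ⟨u.reverse, Or.inl rfl, Or.inr ⟨a, t, ht.symm⟩,
            Or.inr (by rw [← ht]; exact ext_ne _ _ _)⟩)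
        · exact Or.inr ((ltr_iff S u' u).2 ⟨u.reverse, Or.inr ⟨b, t, ht.symm⟩, Or.inl rfl,
            Or.inl (by rw [← ht]; exact ext_ne _ _ _)⟩)
    · obtain _ | ⟨s, t⟩ := t
      · exact absurd (List.reverse_injective (by simpa using ht)).symm hne
      · obtain (a | b) := s
        · exact Or.inr ((ltr_iff S u' u).2 ⟨u'.reverse, Or.inl rfl, Or.inr ⟨a, t, ht.symm⟩,
            Or.inr (by rw [← ht]; exact ext_ne _ _ _)⟩)
        · exact Or.inl ((ltr_iff S u u').2 ⟨u'.reverse, Or.inr ⟨b, t, ht.symm⟩, Or.inl rfl,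
            Or.inl (by rw [← ht]; exact ext_ne _ _ _)⟩)
    · have hu1 : u = t.reverse ++ s₁ :: z.reverse := by
        rw [← List.reverse_reverse u, h1]; simp
      have hu2 : u' = t'.reverse ++ s₂ :: z.reverse := by
        rw [← List.reverse_reverse u', h2]; simp
      obtain (a₁ | b₁) := s₁ <;> obtain (a₂ | b₂) := s₂
      · have hab : a₁ ≠ a₂ := by rintro rfl; exact hsne rfl
        exact (sign_not_both_inl S hSA hσε hu hu' hab hu1 hu2).elim
      · exact Or.inr ((ltr_iff S u' u).2 ⟨z, Or.inr ⟨b₂, t', h2⟩, Or.inr ⟨a₁, t, h1⟩,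
          Or.inl (by rw [h2]; exact ext_ne _ _ _)⟩)
      · exact Or.inl ((ltr_iff S u u').2 ⟨z, Or.inr ⟨b₁, t, h1⟩, Or.inr ⟨a₂, t', h2⟩,
          Or.inl (by rw [h1]; exact ext_ne _ _ _)⟩)
      · have hab : b₁ ≠ b₂ := by rintro rfl; exact hsne rfl
        exact (sign_not_both_inr S hSA hσε hu hu' hab hu1 hu2).elim
end
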